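/- Let 1 ≤ p < ∞ and let θ be a radial weight function of exponential growth rate η ≥ 0 with constant C_θ. Then for every t > 0 and every measurable v : ℝ^d → ℂ with ‖v‖_{L^p_θ} < ∞, the integral defining [T(t)v](x) converges absolutely for almost every x ∈ ℝ^d and ‖T(t)v‖_{L^p_θ} ≤ C₄(t) · ‖v‖_{L^p_θ}, where C₄(t) := C_θ · a₁^{d/2} · e^{−b₀ t} · (I_{d−1}(νt))^{1/p} with ν := |α|²η²p²/Re α. -/

import Mathlib

open MeasureTheory

/-- Rotation `e^{tS}x` given by the matrix exponential. -/
noncomputable def ouRot (d : ℕ) (S : Matrix (Fin d) (Fin d) ℝ) (t : ℝ)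
    (x : EuclideanSpace ℝ (Fin d)) : EuclideanSpace ℝ (Fin d) :=
  WithLp.toLp 2 (Matrix.mulVec (NormedSpace.exp (t • S)) x)

/-- The scalar complex Ornstein--Uhlenbeck kernel. -/
noncomputable def ouH (d : ℕ) (α δ : ℂ) (S : Matrix (Fin d) (Fin d) ℝ)
    (x ξ : EuclideanSpace ℝ (Fin d)) (t : ℝ) : ℂ :=
  (4 * (Real.pi : ℂ) * α * t) ^ (-(d : ℂ) / 2) *
    Complex.exp (-(δ * t) - ((‖ouRot d S t x - ξ‖ ^ 2 : ℝ) : ℂ) / (4 * α * t))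

/-- `I_m(μ) = (2/Γ(d/2)) ∫_0^∞ s^m e^{-s² + 2√μ s} ds`. -/
noncomputable def ouI (d m : ℕ) (μ : ℝ) : ℝ :=
  (2 / Real.Gamma ((d : ℝ) / 2)) *
    ∫ s in Set.Ioi (0 : ℝ), s ^ m * Real.exp (-s ^ 2 + 2 * Real.sqrt μ * s)

/-- The exponentially weighted `L^p` norm `‖v‖_{L^p_θ} = (∫ (θ(x)|v(x)|)^p dx)^{1/p}`. -/
noncomputable def wLpNorm (d : ℕ) (p : ℝ) (θ : EuclideanSpace ℝ (Fin d) → ℝ)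
    (f : EuclideanSpace ℝ (Fin d) → ℂ) : ENNReal :=
  (∫⁻ x : EuclideanSpace ℝ (Fin d), ENNReal.ofReal ((θ x * ‖f x‖) ^ p)) ^ (1 / p)

section OUAux

open Real Set
open scoped ENNReal

lemma ouRot_exists_iso (d : ℕ) (S : Matrix (Fin d) (Fin d) ℝ) (hS : S.transpose = -S) (t : ℝ) :
    ∃ e : EuclideanSpace ℝ (Fin d) ≃ₗᵢ[ℝ] EuclideanSpace ℝ (Fin d),
      ∀ x, e x = ouRot d S t x := by
  set M := NormedSpace.exp (t • S) with hM
  have hMt : M.transpose = NormedSpace.exp (-(t • S)) := by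
    rw [hM, ← Matrix.exp_transpose]
    congr 1
    rw [Matrix.transpose_smul, hS, smul_neg]
  have hMM : M.transpose * M = 1 := by
    rw [hMt, hM, ← Matrix.exp_add_of_commute _ _ (Commute.neg_left (Commute.refl (t • S))), neg_add_cancel,
      NormedSpace.exp_zero]
  have hnorm : ∀ x : EuclideanSpace ℝ (Fin d), ‖(Matrix.toEuclideanLin M) x‖ = ‖x‖ := by
    intro x
    have hdot : ∀ y : Fin d → ℝ, dotProduct y y = ∑ i, ‖y i‖ ^ 2 := by
      intro y
      simp [dotProduct, Real.norm_eq_abs, sq_abs, sq]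
    have key : dotProduct (M.mulVec x) (M.mulVec x)
        = dotProduct (x : Fin d → ℝ) x := by
      rw [Matrix.dotProduct_mulVec, ← Matrix.vecMul_transpose,
        Matrix.vecMul_vecMul, hMM, Matrix.vecMul_one]
    rw [EuclideanSpace.norm_eq, EuclideanSpace.norm_eq]
    rw [← hdot, ← hdot]
    exact congrArg Real.sqrt key
  have hsurj : Function.Surjective (Matrix.toEuclideanLin (𝕜 := ℝ) M) := by
    intro y
    refine ⟨Matrix.toEuclideanLin M.transpose y, ?_⟩
    show WithLp.toLp 2 (M.mulVec (M.transpose.mulVec (WithLp.ofLp y))) = y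
    rw [Matrix.mulVec_mulVec, mul_eq_one_comm.mp hMM, Matrix.one_mulVec, WithLp.toLp_ofLp]
  refine ⟨LinearIsometryEquiv.ofSurjective ⟨Matrix.toEuclideanLin M, hnorm⟩ hsurj, fun x => ?_⟩
  rw [LinearIsometryEquiv.coe_ofSurjective]
  rfl

lemma ouH_abs (d : ℕ) (α δ : ℂ) (hα : 0 < α.re) (S : Matrix (Fin d) (Fin d) ℝ)
    (x ξ : EuclideanSpace ℝ (Fin d)) {t : ℝ} (ht : 0 < t) :
    ‖ouH d α δ S x ξ t‖
      = ((4 * Real.pi * ‖α‖ * t) ^ (-(d : ℝ) / 2) * Real.exp (-(δ.re * t))) *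
        Real.exp (-((α.re / (4 * t * Complex.normSq α)) * ‖ouRot d S t x - ξ‖ ^ 2)) := by
  have hαne : α ≠ 0 := fun h => by simp [h] at hα
  have hz : (4 * (Real.pi : ℂ) * α * t) ≠ 0 := by
    apply mul_ne_zero (mul_ne_zero (mul_ne_zero (by norm_num) _) hαne)
    · exact_mod_cast ht.ne'
    · exact_mod_cast Real.pi_ne_zero
  rw [ouH, norm_mul, Complex.norm_cpow_of_ne_zero hz, Complex.norm_exp]
  have h1 : ((-(d : ℂ) / 2).im) = 0 := by simp
  have h2 : ((-(d : ℂ) / 2).re) = -(d : ℝ) / 2 := by simp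
  rw [h1, h2, mul_zero, Real.exp_zero, div_one]
  have h3 : ‖4 * (Real.pi : ℂ) * α * t‖ = 4 * Real.pi * ‖α‖ * t := by
    simp only [norm_mul]
    rw [show ‖(4 : ℂ)‖ = 4 by norm_num, Complex.norm_of_nonneg Real.pi_pos.le,
      Complex.norm_of_nonneg ht.le]
  rw [h3]
  have h4 : (-(δ * t) - ((‖ouRot d S t x - ξ‖ ^ 2 : ℝ) : ℂ) / (4 * α * t)).re
      = -(δ.re * t) + -((α.re / (4 * t * Complex.normSq α)) * ‖ouRot d S t x - ξ‖ ^ 2) := by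
    rw [Complex.sub_re, Complex.neg_re]
    have : (δ * (t : ℂ)).re = δ.re * t := by
      simp [Complex.mul_re]
    rw [this]
    have h5 : (((‖ouRot d S t x - ξ‖ ^ 2 : ℝ) : ℂ) / (4 * α * t)).re
        = ‖ouRot d S t x - ξ‖ ^ 2 * ((4 * α * (t : ℂ))⁻¹).re := by
      rw [div_eq_mul_inv]
      simp only [Complex.mul_re, Complex.ofReal_re, Complex.ofReal_im, zero_mul, sub_zero]
    have h6 : ((4 * α * (t : ℂ))⁻¹).re = α.re / (4 * t * Complex.normSq α) := by
      have hns : Complex.normSq (4 * α * (t : ℂ)) = 16 * Complex.normSq α * t ^ 2 := by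
        simp only [map_mul]
        rw [show Complex.normSq 4 = 16 by norm_num [Complex.normSq_apply]]
        rw [Complex.normSq_ofReal]; ring
      have hre : (4 * α * (t : ℂ)).re = 4 * α.re * t := by simp [Complex.mul_re]
      have hns0 : Complex.normSq α ≠ 0 := by
        simpa using (Complex.normSq_pos.mpr hαne).ne'
      rw [Complex.inv_re, hns, hre]
      rw [div_eq_div_iff (by positivity) (by positivity)]
      ring
    rw [h5, h6]; ring
  rw [h4, Real.exp_add]
  ring

lemma aux_integrable (d : ℕ) {c : ℝ} (hc : 0 < c) (k : ℝ) :
    Integrable (fun z : EuclideanSpace ℝ (Fin d) => Real.exp (-(c * ‖z‖ ^ 2) + k * ‖z‖)) := by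
  have hbase : Integrable (fun z : EuclideanSpace ℝ (Fin d) => Real.exp (-(c / 2) * ‖z‖ ^ 2)) := by
    have h := (GaussianFourier.integrable_cexp_neg_mul_sq_norm_add
      (V := EuclideanSpace ℝ (Fin d)) (b := (c / 2 : ℂ)) (by simpa using half_pos hc) 0 0).re
    refine h.congr (Filter.Eventually.of_forall fun z => ?_)
    simp only
    rw [show (-(( c : ℂ) / 2) * (‖z‖ : ℂ) ^ 2 + 0 * ((inner ℝ (0 : EuclideanSpace ℝ (Fin d)) z : ℝ) : ℂ))
        = ((-(c / 2) * ‖z‖ ^ 2 : ℝ) : ℂ) by push_cast; ring]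
    rw [show (RCLike.re : ℂ →+ ℝ) = Complex.reAddGroupHom from rfl]
    exact Complex.exp_ofReal_re (-(c / 2) * ‖z‖ ^ 2)
  refine (hbase.const_mul (Real.exp (k ^ 2 / (2 * c)))).mono' ?_
    (Filter.Eventually.of_forall fun z => ?_)
  · exact (Real.continuous_exp.comp (by fun_prop)).aestronglyMeasurable
  · rw [Real.norm_eq_abs, abs_of_pos (Real.exp_pos _), ← Real.exp_add]
    apply Real.exp_le_exp.mpr
    have key : k * ‖z‖ ≤ c / 2 * ‖z‖ ^ 2 + k ^ 2 / (2 * c) := by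
      rw [← sub_nonneg]
      have : c / 2 * ‖z‖ ^ 2 + k ^ 2 / (2 * c) - k * ‖z‖ = (c * ‖z‖ - k) ^ 2 / (2 * c) := by
        field_simp; ring
      rw [this]
      positivity
    linarith

lemma aux_radial (d : ℕ) (hd : 1 ≤ d) {c : ℝ} (hc : 0 < c) (k : ℝ) :
    (∫ z : EuclideanSpace ℝ (Fin d), Real.exp (-(c * ‖z‖ ^ 2) + k * ‖z‖))
      = ((d : ℝ) * (volume (Metric.ball (0 : EuclideanSpace ℝ (Fin d)) 1)).toReal
          * ((Real.sqrt c)⁻¹) ^ d)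
        * ∫ s in Set.Ioi (0 : ℝ), s ^ (d - 1) * Real.exp (-s ^ 2 + (k / Real.sqrt c) * s) := by
  haveI : Nonempty (Fin d) := ⟨⟨0, hd⟩⟩
  have hsc : 0 < Real.sqrt c := Real.sqrt_pos.mpr hc
  have hb : (0 : ℝ) < (Real.sqrt c)⁻¹ := by positivity
  rw [MeasureTheory.integral_fun_norm_addHaar volume
    (fun r : ℝ => Real.exp (-(c * r ^ 2) + k * r))]
  rw [finrank_euclideanSpace_fin]
  have hsub : ∫ y in Set.Ioi (0 : ℝ), y ^ (d - 1) • Real.exp (-(c * y ^ 2) + k * y)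
      = ((Real.sqrt c)⁻¹) ^ d * ∫ s in Set.Ioi (0 : ℝ),
          s ^ (d - 1) * Real.exp (-s ^ 2 + (k / Real.sqrt c) * s) := by
    have h := MeasureTheory.integral_comp_mul_left_Ioi
      (fun y : ℝ => y ^ (d - 1) * Real.exp (-(c * y ^ 2) + k * y)) 0 hb
    rw [mul_zero] at h
    have hcongr : ∀ s ∈ Set.Ioi (0 : ℝ),
        ((Real.sqrt c)⁻¹ * s) ^ (d - 1) * Real.exp (-(c * ((Real.sqrt c)⁻¹ * s) ^ 2)
          + k * ((Real.sqrt c)⁻¹ * s))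
        = ((Real.sqrt c)⁻¹) ^ (d - 1)
            * (s ^ (d - 1) * Real.exp (-s ^ 2 + (k / Real.sqrt c) * s)) := by
      intro s _
      have h1 : c * ((Real.sqrt c)⁻¹ * s) ^ 2 = s ^ 2 := by
        rw [mul_pow, inv_pow, Real.sq_sqrt hc.le]
        field_simp
      rw [mul_pow, h1, div_eq_mul_inv, mul_comm k]
      ring_nf
    rw [setIntegral_congr_fun measurableSet_Ioi hcongr, MeasureTheory.integral_const_mul,
      inv_inv] at h
    have hd' : d - 1 + 1 = d := Nat.sub_add_cancel hd
    have key : ∫ y in Set.Ioi (0 : ℝ), y ^ (d - 1) * Real.exp (-(c * y ^ 2) + k * y)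
        = (Real.sqrt c)⁻¹ * ((Real.sqrt c)⁻¹ ^ (d - 1) * ∫ s in Set.Ioi (0 : ℝ),
            s ^ (d - 1) * Real.exp (-s ^ 2 + (k / Real.sqrt c) * s)) := by
      rw [h, smul_eq_mul, ← mul_assoc, inv_mul_cancel₀ hsc.ne', one_mul]
    simp_rw [smul_eq_mul]
    rw [key, ← mul_assoc, ← pow_succ', hd']
  rw [hsub]
  rw [nsmul_eq_mul, smul_eq_mul, measureReal_def]
  ring

lemma aux_moment (d : ℕ) (hd : 1 ≤ d) :
    ∫ s in Set.Ioi (0 : ℝ), s ^ (d - 1) * Real.exp (-s ^ 2)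
      = Real.Gamma ((d : ℝ) / 2) / 2 := by
  have hd1 : (1 : ℝ) ≤ (d : ℝ) := by exact_mod_cast hd
  have h := integral_rpow_mul_exp_neg_rpow (p := 2) (q := (d : ℝ) - 1) (by norm_num)
    (by linarith)
  have hcong : (∫ s in Set.Ioi (0 : ℝ), s ^ (d - 1) * Real.exp (-s ^ 2))
      = ∫ x in Set.Ioi (0 : ℝ), x ^ ((d : ℝ) - 1) * Real.exp (-x ^ (2 : ℝ)) := by
    refine setIntegral_congr_fun measurableSet_Ioi (fun x hx => ?_)
    have hx : (0 : ℝ) < x := hx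
    have h1 : x ^ ((d : ℝ) - 1) = x ^ (d - 1) := by
      rw [show ((d : ℝ) - 1) = ((d - 1 : ℕ) : ℝ) by push_cast [Nat.cast_sub hd]; ring]
      exact Real.rpow_natCast x (d - 1)
    have h2 : x ^ (2 : ℝ) = x ^ 2 := by
      rw [show (2 : ℝ) = ((2 : ℕ) : ℝ) by norm_num]
      exact Real.rpow_natCast x 2
    simp only [h1, h2]
  rw [hcong, h]
  rw [show ((d : ℝ) - 1 + 1) = (d : ℝ) by ring]
  ring

lemma aux_const (d : ℕ) (hd : 1 ≤ d) {a r t : ℝ} (ha : 0 < a) (hr : 0 < r) (ht : 0 < t) :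
    (4 * Real.pi * a * t) ^ (-(d : ℝ) / 2)
        * ((d : ℝ) * (volume (Metric.ball (0 : EuclideanSpace ℝ (Fin d)) 1)).toReal
            * ((Real.sqrt (r / (4 * t * a ^ 2)))⁻¹) ^ d)
        * (Real.Gamma ((d : ℝ) / 2) / 2)
      = (a / r) ^ ((d : ℝ) / 2) := by
  haveI : Nonempty (Fin d) := ⟨⟨0, hd⟩⟩
  set c := r / (4 * t * a ^ 2) with hc
  have hcpos : 0 < c := by rw [hc]; positivity
  have hd2 : (0 : ℝ) < (d : ℝ) / 2 := by
    have : (1 : ℝ) ≤ (d : ℝ) := by exact_mod_cast hd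
    linarith
  have hΓpos : 0 < Real.Gamma ((d : ℝ) / 2) := Real.Gamma_pos_of_pos hd2
  have hvol : (volume (Metric.ball (0 : EuclideanSpace ℝ (Fin d)) 1)).toReal
      = Real.sqrt Real.pi ^ d / Real.Gamma ((d : ℝ) / 2 + 1) := by
    rw [EuclideanSpace.volume_ball (Fin d) 0 1]
    rw [Fintype.card_fin]
    rw [ENNReal.ofReal_one, one_pow, one_mul]
    exact ENNReal.toReal_ofReal (by positivity)
  rw [hvol, Real.Gamma_add_one hd2.ne']
  have hπ := Real.pi_pos
  have h4 : (0 : ℝ) < 4 * Real.pi * a * t := by positivity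
  have e1 : (4 * Real.pi * a * t) ^ (-(d : ℝ) / 2)
      = ((Real.sqrt (4 * Real.pi * a * t))⁻¹) ^ d := by
    rw [show (-(d : ℝ) / 2) = (-(1 : ℝ) / 2) * d by ring, Real.rpow_mul h4.le,
      Real.rpow_natCast]
    congr 1
    rw [show (-(1 : ℝ) / 2) = -(1 / 2 : ℝ) by ring, Real.rpow_neg h4.le,
      ← Real.sqrt_eq_rpow]
  have e2 : (a / r) ^ ((d : ℝ) / 2) = (Real.sqrt (a / r)) ^ d := by
    rw [show ((d : ℝ) / 2) = (1 / 2 : ℝ) * d by ring, Real.rpow_mul (by positivity),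
      Real.rpow_natCast, ← Real.sqrt_eq_rpow]
  rw [e1, e2]
  have key : (Real.sqrt (4 * Real.pi * a * t))⁻¹ * (Real.sqrt Real.pi * (Real.sqrt c)⁻¹)
      = Real.sqrt (a / r) := by
    have hq : 0 ≤ (Real.sqrt (4 * Real.pi * a * t))⁻¹
        * (Real.sqrt Real.pi * (Real.sqrt c)⁻¹) := by positivity
    rw [← Real.sqrt_sq hq]
    congr 1
    rw [mul_pow, mul_pow, inv_pow, inv_pow, Real.sq_sqrt h4.le, Real.sq_sqrt Real.pi_pos.le,
      Real.sq_sqrt hcpos.le, hc]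
    field_simp
  calc ((Real.sqrt (4 * Real.pi * a * t))⁻¹) ^ d
        * ((d : ℝ) * (Real.sqrt Real.pi ^ d / ((d : ℝ) / 2 * Real.Gamma ((d : ℝ) / 2)))
            * ((Real.sqrt c)⁻¹) ^ d) * (Real.Gamma ((d : ℝ) / 2) / 2)
      = ((Real.sqrt (4 * Real.pi * a * t))⁻¹ * (Real.sqrt Real.pi * (Real.sqrt c)⁻¹)) ^ d
          * ((d : ℝ) / ((d : ℝ) / 2 * Real.Gamma ((d : ℝ) / 2))
              * (Real.Gamma ((d : ℝ) / 2) / 2)) := by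
        rw [mul_pow, mul_pow]; ring
    _ = (Real.sqrt (a / r)) ^ d := by
        rw [key]
        have : (d : ℝ) / ((d : ℝ) / 2 * Real.Gamma ((d : ℝ) / 2))
            * (Real.Gamma ((d : ℝ) / 2) / 2) = 1 := by
          field_simp
        rw [this, mul_one]

lemma aux_hoelder {X : Type*} [MeasurableSpace X] (μ : Measure X) {p : ℝ} (hp : 1 ≤ p)
    {f g : X → ℝ≥0∞} (hf : AEMeasurable f μ) (hg : AEMeasurable g μ) :
    ∫⁻ x, f x * g x ∂μ
      ≤ (∫⁻ x, f x ∂μ) ^ (1 - 1 / p) * (∫⁻ x, f x * g x ^ p ∂μ) ^ (1 / p) := by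
  rcases eq_or_lt_of_le hp with h1 | h1
  · subst h1
    simp
  · have hpq : (p.conjExponent).HolderConjugate p :=
      (Real.HolderConjugate.conjExponent h1).symm
    have hq1 : 1 / p.conjExponent = 1 - 1 / p := by
      have := (Real.HolderConjugate.conjExponent h1).inv_add_inv_eq_one
      rw [one_div, one_div, ← this]; ring_nf
    have hq0 : 0 < p.conjExponent := hpq.pos
    have hp0 : 0 < p := lt_trans one_pos h1
    have hsplit : ∀ x, f x * g x = (f x ^ (1 / p.conjExponent)) * ((f x ^ (1 / p)) * g x) := by
      intro x
      rw [← mul_assoc, ← ENNReal.rpow_add_of_nonneg _ _ (by positivity) (by positivity),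
        one_div, one_div, hpq.inv_add_inv_eq_one, ENNReal.rpow_one]
    calc ∫⁻ x, f x * g x ∂μ
        = ∫⁻ x, (fun x => f x ^ (1 / p.conjExponent)) x
            * ((fun x => f x ^ (1 / p) * g x) x) ∂μ := by
          simp only [← hsplit]
      _ ≤ (∫⁻ x, (f x ^ (1 / p.conjExponent)) ^ p.conjExponent ∂μ) ^ (1 / p.conjExponent)
            * (∫⁻ x, (f x ^ (1 / p) * g x) ^ p ∂μ) ^ (1 / p) := by
          exact ENNReal.lintegral_mul_le_Lp_mul_Lq μ hpq (hf.pow_const _)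
            ((hf.pow_const _).mul hg)
      _ = (∫⁻ x, f x ∂μ) ^ (1 - 1 / p) * (∫⁻ x, f x * g x ^ p ∂μ) ^ (1 / p) := by
          congr 1
          · have hinner : (∫⁻ x, (f x ^ (1 / p.conjExponent)) ^ p.conjExponent ∂μ)
                = ∫⁻ x, f x ∂μ := by
              refine lintegral_congr fun x => ?_
              rw [← ENNReal.rpow_mul, one_div, inv_mul_cancel₀ hq0.ne', ENNReal.rpow_one]
            rw [hinner, hq1]
          · congr 1
            refine lintegral_congr fun x => ?_
            rw [ENNReal.mul_rpow_of_nonneg _ _ hp0.le, ← ENNReal.rpow_mul, one_div,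
              inv_mul_cancel₀ hp0.ne', ENNReal.rpow_one]

end OUAux

open scoped ENNReal

/-- boundedness of the Ornstein--Uhlenbeck semigroup on `L^p_θ`. -/
theorem ouSemigroup_Lp_theta_bounded
    (d : ℕ) (hd : 1 ≤ d) (α δ : ℂ) (hα : 0 < α.re)
    (S : Matrix (Fin d) (Fin d) ℝ) (hS : S.transpose = -S)
    (p : ℝ) (hp : 1 ≤ p)
    (θ : EuclideanSpace ℝ (Fin d) → ℝ) (η Cθ : ℝ) (hη : 0 ≤ η) (hCθ : 0 < Cθ)
    (hθc : Continuous θ) (hθpos : ∀ x, 0 < θ x)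
    (hθgrowth : ∀ x y, θ (x + y) ≤ Cθ * θ x * Real.exp (η * ‖y‖))
    (hθrad : ∃ φ : ℝ → ℝ, ∀ x, θ x = φ ‖x‖)
    (t : ℝ) (ht : 0 < t)
    (v : EuclideanSpace ℝ (Fin d) → ℂ) (hv : Measurable v)
    (hvfin : wLpNorm d p θ v < ⊤) :
    (∀ᵐ x : EuclideanSpace ℝ (Fin d),
        Integrable (fun ξ : EuclideanSpace ℝ (Fin d) => ouH d α δ S x ξ t * v ξ)) ∧
    wLpNorm d p θ (fun x => ∫ ξ : EuclideanSpace ℝ (Fin d), ouH d α δ S x ξ t * v ξ)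
      ≤ ENNReal.ofReal
          (Cθ * (‖α‖ / α.re) ^ ((d : ℝ) / 2) * Real.exp (-δ.re * t) *
            (ouI d (d - 1) ((‖α‖ ^ 2 * η ^ 2 * p ^ 2 / α.re) * t)) ^ (1 / p))
        * wLpNorm d p θ v := by
  classical
  obtain ⟨e, he⟩ := ouRot_exists_iso d S hS t
  obtain ⟨φ, hφ⟩ := hθrad
  have hαne : α ≠ 0 := fun h => by simp [h] at hα
  have hp0 : (0 : ℝ) < p := lt_of_lt_of_le one_pos hp
  have habs2 : (0 : ℝ) < ‖α‖ := norm_pos_iff.mpr hαne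
  have hdpos : (0 : ℝ) < (d : ℝ) := by exact_mod_cast hd
  have hd2 : (0 : ℝ) < (d : ℝ) / 2 := by linarith
  have hΓpos := Real.Gamma_pos_of_pos hd2
  set c : ℝ := α.re / (4 * t * ‖α‖ ^ 2) with hcdef
  have hcpos : 0 < c := div_pos hα (by positivity)
  set K : ℝ := (4 * Real.pi * ‖α‖ * t) ^ (-(d : ℝ) / 2) * Real.exp (-(δ.re * t))
    with hKdef
  have hKpos : 0 < K := mul_pos (Real.rpow_pos_of_pos (by positivity) _) (Real.exp_pos _)
  have habs : ∀ x ξ, ‖ouH d α δ S x ξ t‖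
      = K * Real.exp (-(c * ‖e x - ξ‖ ^ 2)) := by
    intro x ξ
    rw [he, ouH_abs d α δ hα S x ξ ht, hKdef, hcdef, Complex.normSq_eq_norm_sq]
  have hθe : ∀ x, θ (e x) = θ x := fun x => by rw [hφ, hφ, e.norm_map]
  have hθb : ∀ x ξ, θ (e x) ≤ Cθ * θ ξ * Real.exp (η * ‖e x - ξ‖) := by
    intro x ξ
    have h7 : ξ + (e x - ξ) = e x := by abel
    have := hθgrowth ξ (e x - ξ)
    rwa [h7] at this
  set w : EuclideanSpace ℝ (Fin d) → ℝ≥0∞ :=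
    fun ξ => ENNReal.ofReal (θ ξ * ‖v ξ‖) with hwdef
  have hvabs : Measurable fun ξ => ‖v ξ‖ := hv.norm
  have hwmeas : Measurable w := (hθc.measurable.mul hvabs).ennreal_ofReal
  set G : ℝ → EuclideanSpace ℝ (Fin d) → ℝ≥0∞ :=
    fun k z => ENNReal.ofReal (K * Real.exp (-(c * ‖z‖ ^ 2) + k * ‖z‖)) with hGdef
  have hGcont : ∀ k, Continuous (G k) := fun k =>
    ENNReal.continuous_ofReal.comp (by fun_prop)
  have hGmeas : ∀ k, Measurable (G k) := fun k => (hGcont k).measurable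
  set L : ℝ → ℝ≥0∞ := fun k => ∫⁻ z, G k z with hLdef
  have htrans1 : ∀ (k : ℝ) (x : EuclideanSpace ℝ (Fin d)), (∫⁻ ξ, G k (e x - ξ)) = L k := by
    intro k x
    have mp : MeasurePreserving (fun ξ : EuclideanSpace ℝ (Fin d) => e x - ξ)
        volume volume := by
      have h1 := (measurePreserving_add_left
        (volume : Measure (EuclideanSpace ℝ (Fin d))) (e x)).comp
        (Measure.measurePreserving_neg (volume : Measure (EuclideanSpace ℝ (Fin d))))
      simpa [Function.comp_def, sub_eq_add_neg] using h1
    exact mp.lintegral_comp (hGmeas k)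
  have htrans2 : ∀ (k : ℝ) (ξ : EuclideanSpace ℝ (Fin d)), (∫⁻ x, G k (e x - ξ)) = L k := by
    intro k ξ
    have mp : MeasurePreserving (fun x : EuclideanSpace ℝ (Fin d) => e x - ξ)
        volume volume := by
      have h1 := (measurePreserving_add_right
        (volume : Measure (EuclideanSpace ℝ (Fin d))) (-ξ)).comp e.measurePreserving
      simpa [Function.comp_def, sub_eq_add_neg] using h1
    exact mp.lintegral_comp (hGmeas k)
  have hL : ∀ k : ℝ, L k = ENNReal.ofReal (K *
      ((((d : ℝ) * (volume (Metric.ball (0 : EuclideanSpace ℝ (Fin d)) 1)).toReal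
          * ((Real.sqrt c)⁻¹) ^ d))
        * ∫ s in Set.Ioi (0 : ℝ), s ^ (d - 1) * Real.exp (-s ^ 2 + (k / Real.sqrt c) * s))) := by
    intro k
    have hint : Integrable (fun z : EuclideanSpace ℝ (Fin d) =>
        K * Real.exp (-(c * ‖z‖ ^ 2) + k * ‖z‖)) := (aux_integrable d hcpos k).const_mul K
    rw [hLdef]
    simp only [hGdef]
    rw [← MeasureTheory.ofReal_integral_eq_lintegral_ofReal hint
      (Filter.Eventually.of_forall fun z => by positivity)]
    congr 1
    rw [MeasureTheory.integral_const_mul, aux_radial d hd hcpos k]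
  set B0 : ℝ := (‖α‖ / α.re) ^ ((d : ℝ) / 2) * Real.exp (-(δ.re * t)) with hB0def
  have hB0pos : 0 < B0 := mul_pos (Real.rpow_pos_of_pos (div_pos habs2 hα) _) (Real.exp_pos _)
  have hconst : K * (((d : ℝ)
        * (volume (Metric.ball (0 : EuclideanSpace ℝ (Fin d)) 1)).toReal
        * ((Real.sqrt c)⁻¹) ^ d) * (Real.Gamma ((d : ℝ) / 2) / 2)) = B0 := by
    have h := aux_const d hd habs2 hα ht
    rw [hB0def, hKdef, hcdef, ← h]
    ring
  have hL0 : L 0 = ENNReal.ofReal B0 := by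
    rw [hL 0]
    congr 1
    simp only [zero_div, zero_mul, add_zero]
    rw [aux_moment d hd, ← hconst]
  set μt : ℝ := (‖α‖ ^ 2 * η ^ 2 * p ^ 2 / α.re) * t with hμdef
  have hsqrtc : 0 < Real.sqrt c := Real.sqrt_pos.mpr hcpos
  have hkc : (p * η) / Real.sqrt c = 2 * Real.sqrt μt := by
    have hren := hα.ne'
    have htn := ht.ne'
    have han := habs2.ne'
    have h1 : ((p * η) / Real.sqrt c / 2) ^ 2 = μt := by
      rw [div_pow, div_pow, Real.sq_sqrt hcpos.le, hcdef, hμdef]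
      field_simp
      ring
    rw [← h1, Real.sqrt_sq (by positivity)]
    ring
  have hIdef : (∫ s in Set.Ioi (0 : ℝ), s ^ (d - 1)
        * Real.exp (-s ^ 2 + ((p * η) / Real.sqrt c) * s))
      = Real.Gamma ((d : ℝ) / 2) / 2 * ouI d (d - 1) μt := by
    rw [hkc, ouI]
    field_simp
  have hIpos : 0 ≤ ouI d (d - 1) μt := by
    rw [ouI]
    apply mul_nonneg (div_nonneg (by norm_num) hΓpos.le)
    apply MeasureTheory.setIntegral_nonneg measurableSet_Ioi
    intro s hs
    have hs0 : (0 : ℝ) < s := hs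
    positivity
  have hL1 : L (p * η) = ENNReal.ofReal (B0 * ouI d (d - 1) μt) := by
    rw [hL (p * η), hIdef, ← hconst]
    congr 1
    ring
  -- pointwise kernel bound
  have key : ∀ x, ENNReal.ofReal (θ x) * (∫⁻ ξ, ‖ouH d α δ S x ξ t * v ξ‖₊)
      ≤ ENNReal.ofReal Cθ * ∫⁻ ξ, G η (e x - ξ) * w ξ := by
    intro x
    rw [← lintegral_const_mul' _ _ ENNReal.ofReal_ne_top,
      ← lintegral_const_mul' _ _ ENNReal.ofReal_ne_top]
    refine lintegral_mono fun ξ => ?_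
    have hnn : (‖ouH d α δ S x ξ t * v ξ‖₊ : ENNReal)
        = ENNReal.ofReal (‖ouH d α δ S x ξ t‖ * ‖v ξ‖) := by
      rw [← norm_mul, ofReal_norm, enorm_eq_nnnorm]
    rw [hnn, hwdef, hGdef]
    rw [← ENNReal.ofReal_mul (hθpos x).le,
      ← ENNReal.ofReal_mul (mul_nonneg hKpos.le (Real.exp_pos _).le),
      ← ENNReal.ofReal_mul hCθ.le]
    apply ENNReal.ofReal_le_ofReal
    calc θ x * (‖ouH d α δ S x ξ t‖ * ‖v ξ‖)
        = θ (e x) * (K * Real.exp (-(c * ‖e x - ξ‖ ^ 2))) * ‖v ξ‖ := by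
          rw [habs, hθe]; ring
      _ ≤ (Cθ * θ ξ * Real.exp (η * ‖e x - ξ‖))
            * (K * Real.exp (-(c * ‖e x - ξ‖ ^ 2))) * ‖v ξ‖ := by
          apply mul_le_mul_of_nonneg_right
            (mul_le_mul_of_nonneg_right (hθb x ξ)
              (mul_nonneg hKpos.le (Real.exp_pos _).le)) (norm_nonneg _)
      _ = Cθ * (K * Real.exp (-(c * ‖e x - ξ‖ ^ 2) + η * ‖e x - ξ‖)
            * (θ ξ * ‖v ξ‖)) := by
          rw [Real.exp_add]; ring
  set A : EuclideanSpace ℝ (Fin d) → ENNReal := fun x => ∫⁻ ξ, G η (e x - ξ) * w ξ with hAdef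
  -- Hoelder step
  have hholder : ∀ x, A x ^ p
      ≤ (L 0) ^ (p - 1) * ∫⁻ ξ, G (p * η) (e x - ξ) * (w ξ) ^ p := by
    intro x
    have hf : AEMeasurable (fun ξ : EuclideanSpace ℝ (Fin d) => G 0 (e x - ξ)) volume :=
      (((hGcont 0).comp (continuous_const.sub continuous_id)).measurable).aemeasurable
    have hgc : Continuous fun ξ : EuclideanSpace ℝ (Fin d) =>
        ENNReal.ofReal (Real.exp (η * ‖e x - ξ‖)) :=
      ENNReal.continuous_ofReal.comp (by fun_prop)
    have hg : AEMeasurable (fun ξ : EuclideanSpace ℝ (Fin d) =>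
        ENNReal.ofReal (Real.exp (η * ‖e x - ξ‖)) * w ξ) volume :=
      (hgc.measurable.mul hwmeas).aemeasurable
    have h := aux_hoelder volume hp hf hg
    have hfg : ∀ ξ : EuclideanSpace ℝ (Fin d),
        G 0 (e x - ξ) * (ENNReal.ofReal (Real.exp (η * ‖e x - ξ‖)) * w ξ)
          = G η (e x - ξ) * w ξ := by
      intro ξ
      rw [hGdef, ← mul_assoc,
        ← ENNReal.ofReal_mul (mul_nonneg hKpos.le (Real.exp_pos _).le)]
      congr 2
      rw [mul_assoc, ← Real.exp_add]
      congr 1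
      ring
    have hfgp : ∀ ξ : EuclideanSpace ℝ (Fin d),
        G 0 (e x - ξ) * (ENNReal.ofReal (Real.exp (η * ‖e x - ξ‖)) * w ξ) ^ p
          = G (p * η) (e x - ξ) * (w ξ) ^ p := by
      intro ξ
      rw [ENNReal.mul_rpow_of_nonneg _ _ hp0.le,
        ENNReal.ofReal_rpow_of_nonneg (Real.exp_pos _).le hp0.le,
        ← Real.exp_mul, hGdef, ← mul_assoc,
        ← ENNReal.ofReal_mul (mul_nonneg hKpos.le (Real.exp_pos _).le)]
      congr 2
      rw [mul_assoc, ← Real.exp_add]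
      congr 1
      ring
    simp only [hfg, hfgp, htrans1 0 x] at h
    have hmono := ENNReal.rpow_le_rpow h hp0.le
    refine le_trans hmono (le_of_eq ?_)
    rw [ENNReal.mul_rpow_of_nonneg _ _ hp0.le, ← ENNReal.rpow_mul, ← ENNReal.rpow_mul,
      show (1 - 1 / p) * p = p - 1 by field_simp,
      show (1 / p) * p = 1 by field_simp, ENNReal.rpow_one]
  -- measurability of A
  have hUmeas : Measurable (Function.uncurry
      fun (x ξ : EuclideanSpace ℝ (Fin d)) => G η (e x - ξ) * w ξ) := by
    refine Measurable.mul (f := fun q : EuclideanSpace ℝ (Fin d) × EuclideanSpace ℝ (Fin d) =>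
      G η (e q.1 - q.2)) (g := fun q => w q.2) ?_ ?_
    · exact ((hGcont η).comp
        ((e.continuous.comp continuous_fst).sub continuous_snd)).measurable
    · exact hwmeas.comp measurable_snd
  have hAmeas : Measurable A := Measurable.lintegral_prod_right hUmeas
  have hU2meas : Measurable (Function.uncurry
      fun (x ξ : EuclideanSpace ℝ (Fin d)) => G (p * η) (e x - ξ) * (w ξ) ^ p) := by
    refine Measurable.mul (f := fun q : EuclideanSpace ℝ (Fin d) × EuclideanSpace ℝ (Fin d) =>
      G (p * η) (e q.1 - q.2)) (g := fun q => (w q.2) ^ p) ?_ ?_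
    · exact ((hGcont (p * η)).comp
        ((e.continuous.comp continuous_fst).sub continuous_snd)).measurable
    · exact (hwmeas.comp measurable_snd).pow_const p
  -- Tonelli
  set Np : ENNReal := ∫⁻ ξ, (w ξ) ^ p with hNpdef
  have hswap : (∫⁻ x, ∫⁻ ξ, G (p * η) (e x - ξ) * (w ξ) ^ p)
      = (L (p * η)) * Np := by
    rw [lintegral_lintegral_swap hU2meas.aemeasurable]
    have hstep : ∀ ξ : EuclideanSpace ℝ (Fin d),
        (∫⁻ x, G (p * η) (e x - ξ) * (w ξ) ^ p) = L (p * η) * (w ξ) ^ p := by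
      intro ξ
      rw [lintegral_mul_const' _ _
        (ENNReal.rpow_ne_top_of_nonneg hp0.le ENNReal.ofReal_ne_top), htrans2]
    rw [lintegral_congr hstep, lintegral_const_mul' _ _ (by rw [hL1]; exact ENNReal.ofReal_ne_top)]
  -- main integral bound
  have hmain : (∫⁻ x, (ENNReal.ofReal Cθ * A x) ^ p)
      ≤ (ENNReal.ofReal Cθ) ^ p * ((L 0) ^ (p - 1) * (L (p * η) * Np)) := by
    have h1 : ∀ x, (ENNReal.ofReal Cθ * A x) ^ p
        = (ENNReal.ofReal Cθ) ^ p * A x ^ p := fun x =>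
      ENNReal.mul_rpow_of_nonneg _ _ hp0.le
    simp only [h1]
    rw [lintegral_const_mul' _ _ (ENNReal.rpow_ne_top_of_nonneg hp0.le ENNReal.ofReal_ne_top)]
    apply mul_le_mul_right
    calc (∫⁻ x, A x ^ p)
        ≤ ∫⁻ x, (L 0) ^ (p - 1) * ∫⁻ ξ, G (p * η) (e x - ξ) * (w ξ) ^ p :=
          lintegral_mono hholder
      _ = (L 0) ^ (p - 1) * ∫⁻ x, ∫⁻ ξ, G (p * η) (e x - ξ) * (w ξ) ^ p := by
          rw [lintegral_const_mul' _ _ (ENNReal.rpow_ne_top_of_nonneg (by linarith)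
            (by rw [hL0]; exact ENNReal.ofReal_ne_top))]
      _ = (L 0) ^ (p - 1) * (L (p * η) * Np) := by rw [hswap]
  -- real constant
  set Creal : ℝ := Cθ * (‖α‖ / α.re) ^ ((d : ℝ) / 2) * Real.exp (-δ.re * t) *
      (ouI d (d - 1) μt) ^ (1 / p) with hCrealdef
  have hCreal : Creal = Cθ * B0 * (ouI d (d - 1) μt) ^ (1 / p) := by
    rw [hCrealdef, hB0def, neg_mul]
    ring
  have hCrealnn : 0 ≤ Creal := by
    rw [hCreal]
    have := Real.rpow_nonneg hIpos (1 / p)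
    positivity
  have hconstpow : (ENNReal.ofReal Cθ) ^ p * ((L 0) ^ (p - 1) * (L (p * η) * Np))
      = ENNReal.ofReal (Creal ^ p) * Np := by
    rw [hL0, hL1]
    rw [ENNReal.ofReal_rpow_of_nonneg hCθ.le hp0.le,
      ENNReal.ofReal_rpow_of_nonneg hB0pos.le (by linarith : (0:ℝ) ≤ p - 1)]
    rw [← mul_assoc, ← mul_assoc, ← ENNReal.ofReal_mul (by positivity),
      ← ENNReal.ofReal_mul (by positivity)]
    congr 2
    have hIp : ((ouI d (d - 1) μt) ^ (1 / p)) ^ p = ouI d (d - 1) μt := by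
      rw [← Real.rpow_mul hIpos, one_div, inv_mul_cancel₀ hp0.ne', Real.rpow_one]
    have hBp : B0 ^ (p - 1) * B0 = B0 ^ p := by
      nth_rewrite 2 [← Real.rpow_one B0]
      rw [← Real.rpow_add hB0pos]
      norm_num
    rw [hCreal, Real.mul_rpow (mul_nonneg hCθ.le hB0pos.le) (Real.rpow_nonneg hIpos _),
      Real.mul_rpow hCθ.le hB0pos.le, hIp, ← hBp]
    ring
  -- Np in terms of wLpNorm v
  have hNp : Np = (wLpNorm d p θ v) ^ p := by
    rw [hNpdef, wLpNorm, ← ENNReal.rpow_mul, one_div, inv_mul_cancel₀ hp0.ne',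
      ENNReal.rpow_one]
    refine lintegral_congr fun ξ => ?_
    rw [hwdef]
    exact ENNReal.ofReal_rpow_of_nonneg
      (mul_nonneg (hθpos ξ).le (norm_nonneg _)) hp0.le
  have hNpfin : Np ≠ ⊤ := by
    rw [hNp]
    exact (ENNReal.rpow_lt_top_of_nonneg hp0.le hvfin.ne).ne
  -- pointwise bound for the weighted output
  have hTv : ∀ x, ENNReal.ofReal ((θ x * ‖∫ ξ, ouH d α δ S x ξ t * v ξ‖) ^ p)
      ≤ (ENNReal.ofReal Cθ * A x) ^ p := by
    intro x
    rw [← ENNReal.ofReal_rpow_of_nonneg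
      (mul_nonneg (hθpos x).le (norm_nonneg _)) hp0.le]
    apply ENNReal.rpow_le_rpow _ hp0.le
    rw [ENNReal.ofReal_mul (hθpos x).le]
    calc ENNReal.ofReal (θ x) * ENNReal.ofReal (‖∫ ξ, ouH d α δ S x ξ t * v ξ‖)
        ≤ ENNReal.ofReal (θ x) * ∫⁻ ξ, ‖ouH d α δ S x ξ t * v ξ‖₊ := by
          apply mul_le_mul_right
          rw [ofReal_norm]
          exact MeasureTheory.enorm_integral_le_lintegral_enorm _
      _ ≤ ENNReal.ofReal Cθ * A x := key x
  -- part 2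
  have part2 : wLpNorm d p θ (fun x => ∫ ξ, ouH d α δ S x ξ t * v ξ)
      ≤ ENNReal.ofReal Creal * wLpNorm d p θ v := by
    rw [wLpNorm]
    have h1 : (∫⁻ x, ENNReal.ofReal
          ((θ x * ‖∫ ξ, ouH d α δ S x ξ t * v ξ‖) ^ p))
        ≤ ENNReal.ofReal (Creal ^ p) * Np :=
      (lintegral_mono hTv).trans (hmain.trans_eq hconstpow)
    calc (∫⁻ x, ENNReal.ofReal
          ((θ x * ‖∫ ξ, ouH d α δ S x ξ t * v ξ‖) ^ p)) ^ (1 / p)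
        ≤ (ENNReal.ofReal (Creal ^ p) * Np) ^ (1 / p) :=
          ENNReal.rpow_le_rpow h1 (by positivity)
      _ = ENNReal.ofReal Creal * wLpNorm d p θ v := by
          rw [ENNReal.mul_rpow_of_nonneg _ _ (by positivity), hNp,
            ← ENNReal.rpow_mul (wLpNorm d p θ v), mul_one_div,
            div_self hp0.ne', ENNReal.rpow_one]
          congr 1
          rw [← ENNReal.ofReal_rpow_of_nonneg hCrealnn hp0.le,
            ← ENNReal.rpow_mul, mul_one_div, div_self hp0.ne', ENNReal.rpow_one]
  -- part 1 : a.e. integrability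
  have hHcont : ∀ x, Continuous fun ξ : EuclideanSpace ℝ (Fin d) => ouH d α δ S x ξ t := by
    intro x
    unfold ouH
    apply continuous_const.mul
    apply Complex.continuous_exp.comp
    apply Continuous.sub continuous_const
    apply Continuous.div_const
    exact Complex.continuous_ofReal.comp (by fun_prop)
  have hfin2 : (∫⁻ x, (ENNReal.ofReal Cθ * A x) ^ p) ≠ ⊤ := by
    apply ne_of_lt
    apply lt_of_le_of_lt (hmain.trans_eq hconstpow)
    exact ENNReal.mul_lt_top ENNReal.ofReal_lt_top hNpfin.lt_top
  have hmeas2 : Measurable fun x => (ENNReal.ofReal Cθ * A x) ^ p :=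
    (hAmeas.const_mul _).pow_const p
  have hae := MeasureTheory.ae_lt_top hmeas2 hfin2
  refine ⟨hae.mono fun x hx => ?_, part2⟩
  have hbase : ENNReal.ofReal Cθ * A x ≠ ⊤ := by
    intro hcontra
    rw [hcontra, ENNReal.top_rpow_of_pos hp0] at hx
    exact absurd hx (lt_irrefl ⊤)
  have hθne : ENNReal.ofReal (θ x) ≠ 0 := (ENNReal.ofReal_pos.mpr (hθpos x)).ne'
  have hFx : (∫⁻ ξ, ‖ouH d α δ S x ξ t * v ξ‖₊) < ⊤ := by
    by_contra hcon
    push_neg at hcon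
    have htop : (∫⁻ ξ, ‖ouH d α δ S x ξ t * v ξ‖₊) = ⊤ := top_le_iff.mp hcon
    have h2 := key x
    rw [htop, ENNReal.mul_top hθne, top_le_iff] at h2
    exact hbase h2
  exact ⟨((hHcont x).measurable.mul hv).aestronglyMeasurable, hFx⟩
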